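/- Let Ψ be a strong homotopy action of a group G on a topological space X, S ⊆ G a finite symmetric subset with e ∈ S, and α ≥ 0, with M^α, i^α, p, H^α as defined. Then for all f ∈ M^α and t, t' ∈ [0,1]: H^α(f, t) ∈ M^α; H^α(f, 1) = f; H^α(H^α(f, t'), t) = H^α(f, t·t'); H^α(f, 0) = p(i^α(f)), and p(x) ∈ M^α for every x ∈ X; and i^α(H^α(f, t)) = i^α(f). In particular, H^α is a homotopy between p ∘ i^α and the identity of M^α through maps that do not change the value of i^α. -/

import Mathlib

open unitInterval ENNReal

/-- A strong homotopy action of a group `G` on a topological space `X`.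
The argument `(g_j, t_j, g_{j-1}, …, g_1, t_1, g_0, x)` is encoded as the list
`[(g_j,t_j),…,(g_1,t_1)]`, the final group element `g_0` and the point `x`.
Continuity (with `G` discrete) is encoded summand-wise: for every length `n` and
every fixed tuple of group elements, the map is jointly continuous in the
parameters `t_i ∈ [0,1]` and in `x`. -/
structure StrongHomotopyAction (G X : Type*) [Group G] [TopologicalSpace X] where
  toFun : List (G × unitInterval) → G → X → X
  continuous' : ∀ (n : ℕ) (gs : Fin n → G) (g₀ : G),
    Continuous fun p : (Fin n → unitInterval) × X =>
      toFun (List.ofFn fun i => (gs i, p.1 i)) g₀ p.2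
  act_zero : ∀ (L₁ L₂ : List (G × unitInterval)) (g g₀ : G) (x : X),
    toFun (L₁ ++ (g, (0 : unitInterval)) :: L₂) g₀ x = toFun L₁ g (toFun L₂ g₀ x)
  act_one_mid : ∀ (L₁ L₂ : List (G × unitInterval)) (g g' : G) (t : unitInterval)
      (g₀ : G) (x : X),
    toFun (L₁ ++ (g, (1 : unitInterval)) :: (g', t) :: L₂) g₀ x
      = toFun (L₁ ++ (g * g', t) :: L₂) g₀ x
  act_one_last : ∀ (L : List (G × unitInterval)) (g g₀ : G) (x : X),
    toFun (L ++ [(g, (1 : unitInterval))]) g₀ x = toFun L (g * g₀) x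
  id_head : ∀ (t : unitInterval) (L : List (G × unitInterval)) (g₀ : G) (x : X),
    toFun (((1 : G), t) :: L) g₀ x = toFun L g₀ x
  id_mid : ∀ (L₁ L₂ : List (G × unitInterval)) (g : G) (t t' : unitInterval)
      (g₀ : G) (x : X),
    toFun (L₁ ++ (g, t) :: ((1 : G), t') :: L₂) g₀ x = toFun (L₁ ++ (g, t * t') :: L₂) g₀ x
  id_last : ∀ (L : List (G × unitInterval)) (g : G) (t : unitInterval) (x : X),
    toFun (L ++ [(g, t)]) (1 : G) x = toFun L g x
  id_base : ∀ x : X, toFun [] (1 : G) x = x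

variable {G X : Type*} [Group G] [TopologicalSpace X]

/-- `c_g(f) := (w ↦ f(w, 1, g))`: the element `w = (L, h)` is extended by the time `1`
and the group element `g`. -/
def cMap (g : G) (f : List (G × unitInterval) → G → X) :
    List (G × unitInterval) → G → X :=
  fun L h => f (L ++ [(h, (1 : unitInterval))]) g

/-- `H(f, t) := (w ↦ f(w, t, e))`. -/
def Hmap (f : List (G × unitInterval) → G → X) (t : unitInterval) :
    List (G × unitInterval) → G → X :=
  fun L h => f (L ++ [(h, t)]) (1 : G)

/-- `p(x) := (w ↦ Ψ(w, x))`. -/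
def pMap (Ψ : StrongHomotopyAction G X) (x : X) : List (G × unitInterval) → G → X :=
  fun L h => Ψ.toFun L h x

/-- The set `M` of maps `∐_j ((G × [0,1])^j × G) → X` of the form
`w ↦ Ψ(w, t_α, g_{α-1}, …, t_1, g_0, x)` for some `α ≥ 0`, `t_i ∈ [0,1]`, `g_i ∈ G`
and `x ∈ X` (for `α = 0` this is `w ↦ Ψ(w, x)`, i.e. `p(x)`). -/
def Mset (Ψ : StrongHomotopyAction G X) : Set (List (G × unitInterval) → G → X) :=
  { f | (∃ x : X, f = pMap Ψ x) ∨
        ∃ (t : unitInterval) (L' : List (G × unitInterval)) (g₀ : G) (x : X),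
          f = fun L h => Ψ.toFun (L ++ (h, t) :: L') g₀ x }

/-- `S^α := { s_1 ⋯ s_α | s_i ∈ S }`. -/
def SPow {G : Type*} [Group G] (S : Set G) (α : ℕ) : Set G :=
  { g | ∃ l : List G, l.length = α ∧ (∀ s ∈ l, s ∈ S) ∧ l.prod = g }

/-- The set `M^α` of maps `w ↦ Ψ(w, t_α, g_{α-1}, …, t_1, g_0, x)` with
`t_i ∈ [0,1]`, `g_i ∈ S^α` and `x ∈ X` (for `α = 0` this is `w ↦ Ψ(w, x)`). -/
def Malpha {G X : Type*} [Group G] [TopologicalSpace X]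
    (Ψ : StrongHomotopyAction G X) (S : Set G) :
    ℕ → Set (List (G × unitInterval) → G → X)
  | 0 => { f | ∃ x : X, f = pMap Ψ x }
  | α + 1 => { f | ∃ (t : unitInterval) (L' : List (G × unitInterval)) (g₀ : G) (x : X),
      L'.length = α ∧ (∀ q ∈ L', q.1 ∈ SPow S (α + 1)) ∧ g₀ ∈ SPow S (α + 1) ∧
      f = fun L h => Ψ.toFun (L ++ (h, t) :: L') g₀ x }

lemma shA_collapse {G X : Type*} [Group G] [TopologicalSpace X]
    (Ψ : StrongHomotopyAction G X) :
    ∀ (n : ℕ) (L : List (G × unitInterval)) (h : G) (x : X),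
      Ψ.toFun (L ++ (h, (1 : unitInterval)) ::
        List.replicate n ((1 : G), (1 : unitInterval))) 1 x = Ψ.toFun L h x := by
  intro n
  induction n with
  | zero =>
    intro L h x
    simpa using Ψ.id_last L h 1 x
  | succ n ih =>
    intro L h x
    rw [List.replicate_succ, Ψ.id_mid L _ h 1 1 1 x, mul_one]
    exact ih L h x

lemma shA_Hmap_core {G X : Type*} [Group G] [TopologicalSpace X]
    (Ψ : StrongHomotopyAction G X) (t : unitInterval) (L' : List (G × unitInterval))
    (g₀ : G) (x : X) (s : unitInterval) :
    Hmap (fun L h => Ψ.toFun (L ++ (h, t) :: L') g₀ x) s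
      = fun L h => Ψ.toFun (L ++ (h, s * t) :: L') g₀ x := by
  funext L h
  show Ψ.toFun ((L ++ [(h, s)]) ++ ((1 : G), t) :: L') g₀ x = _
  rw [List.append_assoc]
  exact Ψ.id_mid L L' h s t g₀ x

/-- `H^α` is a homotopy between `p ∘ i^α` and the identity of `M^α` through maps
that do not change the value of `i^α` (where `i^α(f) := f(e)`): for `f ∈ M^α` and
`t, t' ∈ [0,1]` we have `H^α(f,t) ∈ M^α`, `H^α(f,1) = f`,
`H^α(H^α(f,t'),t) = H^α(f, t·t')`, `H^α(f,0) = p(i^α(f))`, `p(x) ∈ M^α` for all `x`,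
and `i^α(H^α(f,t)) = i^α(f)`. -/
theorem Malpha_deformation {G X : Type*} [Group G] [TopologicalSpace X]
    (Ψ : StrongHomotopyAction G X) (S : Set G) (hSfin : S.Finite)
    (hSsymm : ∀ s ∈ S, s⁻¹ ∈ S) (hSone : (1 : G) ∈ S) (α : ℕ) :
    (∀ f ∈ Malpha Ψ S α, ∀ t t' : unitInterval,
      Hmap f t ∈ Malpha Ψ S α ∧
      Hmap f 1 = f ∧
      Hmap (Hmap f t') t = Hmap f (t * t') ∧
      Hmap f 0 = pMap Ψ (f [] (1 : G)) ∧
      Hmap f t [] (1 : G) = f [] (1 : G)) ∧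
    (∀ x : X, pMap Ψ x ∈ Malpha Ψ S α) := by
  constructor
  · intro f hf t t'
    cases α with
    | zero =>
      obtain ⟨x, rfl⟩ := hf
      have key : ∀ s : unitInterval, Hmap (pMap Ψ x) s = pMap Ψ x := by
        intro s
        funext L h
        show Ψ.toFun (L ++ [(h, s)]) 1 x = Ψ.toFun L h x
        exact Ψ.id_last L h s x
      have hbase : pMap Ψ x [] (1 : G) = x := Ψ.id_base x
      refine ⟨⟨x, (key t).symm ▸ rfl⟩, key 1, ?_, ?_, ?_⟩
      · rw [key t', key t, key (t * t')]
      · rw [key 0, hbase]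
      · rw [key t]
    | succ n =>
      obtain ⟨u, L', g₀, x, hlen, hq, hg₀, rfl⟩ := hf
      have base : ∀ s : unitInterval,
          Hmap (fun L h => Ψ.toFun (L ++ (h, u) :: L') g₀ x) s
            = fun L h => Ψ.toFun (L ++ (h, s * u) :: L') g₀ x :=
        shA_Hmap_core Ψ u L' g₀ x
      have ival : ∀ s : unitInterval,
          (fun L h => Ψ.toFun (L ++ (h, s) :: L') g₀ x) [] (1 : G)
            = Ψ.toFun L' g₀ x := by
        intro s
        show Ψ.toFun (((1 : G), s) :: L') g₀ x = _
        exact Ψ.id_head s L' g₀ x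
      refine ⟨⟨t * u, L', g₀, x, hlen, hq, hg₀, base t⟩, ?_, ?_, ?_, ?_⟩
      · rw [base 1, one_mul]
      · rw [base t', base (t * t'), shA_Hmap_core Ψ (t' * u) L' g₀ x t, mul_assoc]
      · rw [base 0, zero_mul]
        funext L h
        show Ψ.toFun (L ++ (h, (0 : unitInterval)) :: L') g₀ x = _
        rw [Ψ.act_zero L L' h g₀ x]
        show _ = Ψ.toFun L h ((fun L h => Ψ.toFun (L ++ (h, u) :: L') g₀ x) [] (1 : G))
        rw [ival u]
      · rw [base t]
        rw [ival (t * u), ival u]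
  · intro x
    cases α with
    | zero => exact ⟨x, rfl⟩
    | succ n =>
      refine ⟨1, List.replicate n ((1 : G), (1 : unitInterval)), 1, x,
        List.length_replicate, ?_, ?_, ?_⟩
      · intro q hq
        have : q = ((1 : G), (1 : unitInterval)) := List.eq_of_mem_replicate hq
        subst this
        exact ⟨List.replicate (n + 1) (1 : G), List.length_replicate,
          fun s hs => (List.eq_of_mem_replicate hs) ▸ hSone, by simp⟩
      · exact ⟨List.replicate (n + 1) (1 : G), List.length_replicate,
          fun s hs => (List.eq_of_mem_replicate hs) ▸ hSone, by simp⟩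
      · funext L h
        show Ψ.toFun L h x = _
        exact (shA_collapse Ψ n L h x).symm
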